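/- Let Ω ⊆ ℝⁿ be a nonempty closed convex set, F : ℝⁿ → ℝⁿ continuous and monotone on Ω, and let φ : ℝⁿ → ℝ ∪ {+∞} be convex with effective domain Ω and continuous on Ω, satisfying 0 ∈ ri(dom ∂φ − Ω). Then for every ε > 0, S₀ ∩ S_ε ⊆ S_φ. -/
import Mathlib


open Set Pointwise
open scoped InnerProductSpace

/-- The (convex) subdifferential of φ (viewed as the extended function equal to φ on
Ω and +∞ outside of Ω, so that its effective domain is Ω). -/
def subdiffOn {n : ℕ} (Ω : Set (EuclideanSpace ℝ (Fin n)))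
    (φ : EuclideanSpace ℝ (Fin n) → ℝ) (x : EuclideanSpace ℝ (Fin n)) :
    Set (EuclideanSpace ℝ (Fin n)) :=
  {v | x ∈ Ω ∧ ∀ y ∈ Ω, φ x + ⟪v, y - x⟫_ℝ ≤ φ y}

/-- for every ε > 0 one has S₀ ∩ S_ε ⊆ S_φ. -/
theorem S0_inter_Seps_subset_Sphi {n : ℕ}
    (Ω : Set (EuclideanSpace ℝ (Fin n)))
    (hne : Ω.Nonempty) (hcl : IsClosed Ω) (hconv : Convex ℝ Ω)
    (F : EuclideanSpace ℝ (Fin n) → EuclideanSpace ℝ (Fin n))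
    (hFcont : ContinuousOn F Ω)
    (hFmono : ∀ x ∈ Ω, ∀ y ∈ Ω, 0 ≤ ⟪F x - F y, x - y⟫_ℝ)
    (φ : EuclideanSpace ℝ (Fin n) → ℝ)
    (hφconv : ConvexOn ℝ Ω φ) (hφcont : ContinuousOn φ Ω)
    (hri : (0 : EuclideanSpace ℝ (Fin n)) ∈
      intrinsicInterior ℝ ({x | (subdiffOn Ω φ x).Nonempty} - Ω)) :
    ∀ ε : ℝ, 0 < ε →
      ({x | x ∈ Ω ∧ ∀ y ∈ Ω, 0 ≤ ⟪F x, y - x⟫_ℝ} ∩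
        {x | x ∈ Ω ∧ ∃ v ∈ subdiffOn Ω φ x, ∀ z ∈ Ω, 0 ≤ ⟪F x + ε • v, z - x⟫_ℝ}) ⊆
      {x | (x ∈ Ω ∧ ∀ y ∈ Ω, 0 ≤ ⟪F x, y - x⟫_ℝ) ∧
        ∃ v ∈ subdiffOn Ω φ x,
          ∀ z, (z ∈ Ω ∧ ∀ y ∈ Ω, 0 ≤ ⟪F z, y - z⟫_ℝ) → 0 ≤ ⟪v, z - x⟫_ℝ} := by
  intro ε hε x hx
  obtain ⟨⟨hxΩ, hx0⟩, ⟨_, v, hvmem, hvε⟩⟩ := hx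
  refine ⟨⟨hxΩ, hx0⟩, v, hvmem, ?_⟩
  rintro z ⟨hzΩ, hz0⟩
  have e1 := hx0 z hzΩ
  have e2 := hz0 x hxΩ
  have e3 := hFmono x hxΩ z hzΩ
  have e4 := hvε z hzΩ
  simp only [inner_sub_left, inner_sub_right, inner_add_left,
    real_inner_smul_left] at e1 e2 e3 e4 ⊢
  nlinarith [e1, e2, e3, e4, hε]
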